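/- arXiv:2111.00248 — 2 statements merged into one kernel-verified Lean document; each statement's English description precedes it below -/
import Mathlib

section
/- Let d ≥ 1, B ≥ 0, λ > 0, M > 0. Let (Ω, F, P) be a probability space and W : Ω × [0,∞) → ℝ^d a process with almost surely continuous paths. Suppose that for each x ∈ ℝ^d there are: a process X^x with continuous paths satisfying almost surely |X^x_t − x − W_t| ≤ B·t for all t ≥ 0, and a random variable T^x ≥ 0 with P(T^x > t) ≤ exp(−λt) for all t ≥ 0. Then for every δ > 0 there exists M₁ > M such that for all x with |x| ≥ M₁: E[∫₀^{T^x} 1(inf_{0≤s≤t} |X^x_s| ≤ M) dt] < δ. -/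
open MeasureTheory

/-- An upper set of reals is measurable. -/
lemma upperSet_measurableSet {S : Set ℝ}
    (h : ∀ a ∈ S, ∀ b, a ≤ b → b ∈ S) : MeasurableSet S := by
  rcases Set.eq_empty_or_nonempty S with hS | hS
  · simp [hS]
  by_cases hbdd : BddBelow S
  · set a := sInf S with ha
    have h1 : Set.Ioi a ⊆ S := by
      intro b hb
      obtain ⟨c, hc, hcb⟩ := (csInf_lt_iff hbdd hS).mp hb
      exact h c hc b hcb.le
    have h2 : S ⊆ Set.Ici a := fun b hb => csInf_le hbdd hb
    by_cases haS : a ∈ S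
    · have : S = Set.Ici a := Set.Subset.antisymm h2 (fun b hb => h a haS b hb)
      rw [this]; exact measurableSet_Ici
    · have : S = Set.Ioi a := by
        apply Set.Subset.antisymm _ h1
        intro b hb
        rcases eq_or_lt_of_le (Set.mem_Ici.mp (h2 hb)) with rfl | hlt
        · exact absurd hb haS
        · exact hlt
      rw [this]; exact measurableSet_Ioi
  · have : S = Set.univ := by
      apply Set.eq_univ_of_forall
      intro b
      obtain ⟨c, hc, hcb⟩ := not_bddBelow_iff.mp hbdd b
      exact h c hc b hcb.le
    rw [this]; exact MeasurableSet.univ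

/-- Lemma 1 of the paper in pathwise form: if `X^x` stays within `B t` of `x + W_t` (a.s.),
`W` has a.s. continuous paths, and `T^x ≥ 0` has exponential tail with rate `λ`, then for
every `δ > 0` there is `M₁ > M` such that for all `‖x‖ ≥ M₁`, the expected time spent by
`X^x` within distance `M` of the origin before `T^x` is `< δ`. -/
theorem stmt7 (d : ℕ) (hd : 1 ≤ d) (B lam M : ℝ) (hB : 0 ≤ B) (hlam : 0 < lam) (hM : 0 < M)
    {Ω : Type*} [MeasurableSpace Ω] (P : Measure Ω) [IsProbabilityMeasure P]
    (W : Ω → ℝ → EuclideanSpace ℝ (Fin d))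
    (hWmeas : Measurable (Function.uncurry W))
    (hWcont : ∀ᵐ ω ∂P, Continuous (W ω))
    (X : EuclideanSpace ℝ (Fin d) → Ω → ℝ → EuclideanSpace ℝ (Fin d))
    (hXmeas : ∀ x, Measurable (Function.uncurry (X x)))
    (hXcont : ∀ x ω, Continuous (X x ω))
    (hXW : ∀ x, ∀ᵐ ω ∂P, ∀ t, 0 ≤ t → ‖X x ω t - x - W ω t‖ ≤ B * t)
    (T : EuclideanSpace ℝ (Fin d) → Ω → ℝ)
    (hTmeas : ∀ x, Measurable (T x)) (hT0 : ∀ x ω, 0 ≤ T x ω)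
    (htail : ∀ x t, 0 ≤ t → P {ω | t < T x ω} ≤ ENNReal.ofReal (Real.exp (-lam * t))) :
    ∀ δ > 0, ∃ M₁ > M, ∀ x : EuclideanSpace ℝ (Fin d), M₁ ≤ ‖x‖ →
      ∫ ω, (∫ t in Set.Ioc 0 (T x ω),
          Set.indicator {t : ℝ | ∃ s ∈ Set.Icc (0:ℝ) t, ‖X x ω s‖ ≤ M} (fun _ => (1:ℝ)) t) ∂P
        < δ := by
  intro δ hδ
  -- choose a time horizon t₀ with small exponential tail contribution
  have htend : Filter.Tendsto (fun t : ℝ => Real.exp (-lam * t) / lam)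
      Filter.atTop (nhds 0) := by
    have h1 : Filter.Tendsto (fun t : ℝ => Real.exp (-(lam * t))) Filter.atTop (nhds 0) :=
      Real.tendsto_exp_neg_atTop_nhds_zero.comp
        (Filter.Tendsto.const_mul_atTop hlam Filter.tendsto_id)
    have := h1.div_const lam
    simpa [neg_mul] using this
  obtain ⟨t₀, ht₀1, ht₀δ⟩ : ∃ t₀ : ℝ, 1 ≤ t₀ ∧ Real.exp (-lam * t₀) / lam < δ / 2 := by
    have h2 := htend.eventually_lt_const (by linarith : (0:ℝ) < δ / 2)
    exact ((Filter.eventually_ge_atTop (1:ℝ)).and h2).exists.imp fun t ht => ⟨ht.1, ht.2⟩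
  have ht₀pos : (0:ℝ) < t₀ := lt_of_lt_of_le one_pos ht₀1
  -- the sets where the Brownian-type path gets large before `t₀`
  set C : ℕ → Set Ω :=
    fun n => ⋃ q : ℚ, {ω | (q:ℝ) ∈ Set.Icc (0:ℝ) t₀ ∧ (n:ℝ) ≤ ‖W ω (q:ℝ)‖} with hC
  have hWq : ∀ q : ℚ, Measurable (fun ω => W ω (q:ℝ)) := fun q =>
    hWmeas.comp (measurable_id.prodMk measurable_const)
  have hCmeas : ∀ n, MeasurableSet (C n) := by
    intro n
    apply MeasurableSet.iUnion
    intro q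
    have : {ω | (q:ℝ) ∈ Set.Icc (0:ℝ) t₀ ∧ (n:ℝ) ≤ ‖W ω (q:ℝ)‖}
        = {ω | (q:ℝ) ∈ Set.Icc (0:ℝ) t₀} ∩ {ω | (n:ℝ) ≤ ‖W ω (q:ℝ)‖} := rfl
    rw [this]
    refine MeasurableSet.inter ?_ (measurableSet_le measurable_const (hWq q).norm)
    by_cases h : (q:ℝ) ∈ Set.Icc (0:ℝ) t₀ <;> simp [h]
  have hCanti : Antitone C := by
    intro m n hmn ω hω
    obtain ⟨s, ⟨q, rfl⟩, hq⟩ := hω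
    exact Set.mem_iUnion.mpr ⟨q, hq.1, le_trans (by exact_mod_cast hmn) hq.2⟩
  have hCnull : P (⋂ n, C n) = 0 := by
    refine measure_mono_null ?_ hWcont
    intro ω hω
    simp only [Set.mem_compl_iff, Set.mem_setOf_eq]
    intro hcont
    obtain ⟨sK, hsK, hmax⟩ := isCompact_Icc.exists_isMaxOn (Set.nonempty_Icc.mpr ht₀pos.le)
      ((continuous_norm.comp hcont).continuousOn :
        ContinuousOn (fun u => ‖W ω u‖) (Set.Icc 0 t₀))
    obtain ⟨n, hn⟩ := exists_nat_gt ‖W ω sK‖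
    have := Set.mem_iInter.mp hω n
    obtain ⟨s, ⟨q, rfl⟩, hq1, hq2⟩ := this
    exact absurd (le_trans hq2 (hmax hq1)) (not_le.mpr hn)
  have hClim : Filter.Tendsto (fun n => P (C n)) Filter.atTop (nhds 0) := by
    rw [← hCnull]
    exact tendsto_measure_iInter_atTop (fun n => (hCmeas n).nullMeasurableSet) hCanti
      ⟨0, measure_ne_top P _⟩
  obtain ⟨n, hn⟩ : ∃ n : ℕ, P (C n) < ENNReal.ofReal (δ / (2 * t₀)) := by
    have hpos : (0:ENNReal) < ENNReal.ofReal (δ / (2 * t₀)) :=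
      ENNReal.ofReal_pos.mpr (by positivity)
    exact (hClim.eventually_lt_const hpos).exists
  refine ⟨M + B * t₀ + n + 2, by nlinarith [mul_nonneg hB ht₀pos.le, (Nat.cast_nonneg n : (0:ℝ) ≤ n)], ?_⟩
  intro x hx
  -- notation
  set f : Ω → ℝ := fun ω => ∫ t in Set.Ioc 0 (T x ω),
      Set.indicator {t : ℝ | ∃ s ∈ Set.Icc (0:ℝ) t, ‖X x ω s‖ ≤ M} (fun _ => (1:ℝ)) t with hfdef
  set g : Ω → ℝ :=
    fun ω => t₀ * Set.indicator (C n) (fun _ => (1:ℝ)) ω + max (T x ω - t₀) 0 with hgdef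
  -- integrability of g and a bound on its integral
  have hg1 : Integrable (Set.indicator (C n) (fun _ => (1:ℝ))) P :=
    (integrable_const (1:ℝ)).indicator (hCmeas n)
  have hTm : Measurable (fun ω => max (T x ω - t₀) 0) :=
    ((hTmeas x).sub measurable_const).max measurable_const
  have hTnn : ∀ ω, (0:ℝ) ≤ max (T x ω - t₀) 0 := fun ω => le_max_right _ _
  have hI : ∫ t in Set.Ioi (0:ℝ), Real.exp (-lam * t) = 1 / lam := by
    have h := integral_comp_mul_left_Ioi (fun u => Real.exp (-u)) 0 hlam
    simp only [mul_zero, neg_zero, smul_eq_mul] at h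
    rw [integral_exp_neg_Ioi] at h
    simp only [neg_zero, Real.exp_zero, mul_one] at h
    calc ∫ t in Set.Ioi (0:ℝ), Real.exp (-lam * t)
        = ∫ t in Set.Ioi (0:ℝ), Real.exp (-(lam * t)) := by simp [neg_mul]
      _ = lam⁻¹ := h
      _ = 1 / lam := (one_div lam).symm
  have hexp_int : IntegrableOn (fun t : ℝ => Real.exp (-lam * (t + t₀))) (Set.Ioi 0) := by
    have hfun : (fun t : ℝ => Real.exp (-lam * (t + t₀)))
        = fun t => Real.exp (-lam * t₀) * Real.exp (-lam * t) := by
      funext t; rw [← Real.exp_add]; ring_nf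
    rw [hfun]
    exact (exp_neg_integrableOn_Ioi 0 hlam).const_mul _
  have hexp_val : ∫ t in Set.Ioi (0:ℝ), Real.exp (-lam * (t + t₀))
      = Real.exp (-lam * t₀) / lam := by
    have hfun : (fun t : ℝ => Real.exp (-lam * (t + t₀)))
        = fun t => Real.exp (-lam * t₀) * Real.exp (-lam * t) := by
      funext t; rw [← Real.exp_add]; ring_nf
    rw [hfun, integral_const_mul, hI]
    ring
  have key : ∫⁻ ω, ENNReal.ofReal (max (T x ω - t₀) 0) ∂P
      ≤ ENNReal.ofReal (Real.exp (-lam * t₀) / lam) := by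
    rw [lintegral_eq_lintegral_meas_lt P (Filter.Eventually.of_forall hTnn) hTm.aemeasurable]
    calc ∫⁻ t in Set.Ioi 0, P {a | t < max (T x a - t₀) 0}
        ≤ ∫⁻ t in Set.Ioi 0, ENNReal.ofReal (Real.exp (-lam * (t + t₀))) := by
          refine setLIntegral_mono' measurableSet_Ioi fun t ht => ?_
          have hsub : {a | t < max (T x a - t₀) 0} ⊆ {a | t + t₀ < T x a} := by
            intro a ha
            simp only [Set.mem_setOf_eq, lt_max_iff] at ha ⊢
            rcases ha with h | h
            · linarith
            · exact absurd h (not_lt.mpr (le_of_lt ht))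
          calc P {a | t < max (T x a - t₀) 0} ≤ P {a | t + t₀ < T x a} := measure_mono hsub
            _ ≤ ENNReal.ofReal (Real.exp (-lam * (t + t₀))) :=
                htail x (t + t₀) (by have := le_of_lt (Set.mem_Ioi.mp ht); linarith)
      _ = ENNReal.ofReal (Real.exp (-lam * t₀) / lam) := by
          rw [← ofReal_integral_eq_lintegral_ofReal hexp_int
            (Filter.Eventually.of_forall fun t => (Real.exp_pos _).le), hexp_val]
  have hgmax_int : Integrable (fun ω => max (T x ω - t₀) 0) P := by
    refine ⟨hTm.aestronglyMeasurable, ?_⟩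
    rw [hasFiniteIntegral_iff_ofReal (Filter.Eventually.of_forall hTnn)]
    exact lt_of_le_of_lt key ENNReal.ofReal_lt_top
  have hgint : Integrable g P := (hg1.const_mul t₀).add hgmax_int
  -- pathwise bound f ≤ g a.e.
  have hae : ∀ᵐ ω ∂P, f ω ≤ g ω := by
    filter_upwards [hWcont, hXW x] with ω hWc hXWc
    set S : Set ℝ := {t : ℝ | ∃ s ∈ Set.Icc (0:ℝ) t, ‖X x ω s‖ ≤ M} with hSdef
    have hSm : MeasurableSet S := by
      apply upperSet_measurableSet
      rintro a ⟨s, hs, hXs⟩ b hab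
      exact ⟨s, ⟨hs.1, hs.2.trans hab⟩, hXs⟩
    have hfeq : f ω = (volume (Set.Ioc 0 (T x ω) ∩ S)).toReal := by
      simp only [hfdef]
      rw [setIntegral_indicator hSm, setIntegral_const, smul_eq_mul, mul_one, Measure.real]
    have hIocne : volume (Set.Ioc 0 (T x ω)) ≠ ⊤ := by
      rw [Real.volume_Ioc]; exact ENNReal.ofReal_ne_top
    have hind_nonneg : (0:ℝ) ≤ Set.indicator (C n) (fun _ => (1:ℝ)) ω :=
      Set.indicator_nonneg (fun _ _ => zero_le_one) ω
    by_cases hωC : ω ∈ C n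
    · have hfT : f ω ≤ T x ω := by
        rw [hfeq]
        calc (volume (Set.Ioc 0 (T x ω) ∩ S)).toReal
            ≤ (volume (Set.Ioc 0 (T x ω))).toReal :=
              ENNReal.toReal_mono hIocne (measure_mono Set.inter_subset_left)
          _ = T x ω := by rw [Real.volume_Ioc, sub_zero, ENNReal.toReal_ofReal (hT0 x ω)]
      have : Set.indicator (C n) (fun _ => (1:ℝ)) ω = 1 := Set.indicator_of_mem hωC _
      simp only [hgdef, this, mul_one]
      have := le_max_left (T x ω - t₀) 0
      linarith
    · have hsub : Set.Ioc 0 (T x ω) ∩ S ⊆ Set.Ioc t₀ (T x ω) := by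
        rintro t ⟨⟨ht0, htT⟩, s, ⟨hs0, hst⟩, hXs⟩
        refine ⟨?_, htT⟩
        by_contra hle
        push_neg at hle
        have hst₀ : s ≤ t₀ := hst.trans hle
        have h1 := hXWc s hs0
        have hxWs : ‖x + W ω s‖ ≤ M + B * t₀ := by
          have heq : x + W ω s = X x ω s - (X x ω s - x - W ω s) := by abel
          calc ‖x + W ω s‖ = ‖X x ω s - (X x ω s - x - W ω s)‖ := by rw [← heq]
            _ ≤ ‖X x ω s‖ + ‖X x ω s - x - W ω s‖ := norm_sub_le _ _
            _ ≤ M + B * s := add_le_add hXs h1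
            _ ≤ M + B * t₀ := by nlinarith
        have hWs : (n:ℝ) + 2 ≤ ‖W ω s‖ := by
          have h2 : ‖x‖ ≤ ‖x + W ω s‖ + ‖W ω s‖ := by
            calc ‖x‖ = ‖(x + W ω s) - W ω s‖ := by congr 1; abel
              _ ≤ ‖x + W ω s‖ + ‖W ω s‖ := norm_sub_le _ _
          linarith
        obtain ⟨ε, hε, hball⟩ := Metric.continuous_iff.mp hWc s 1 one_pos
        have hab : max 0 (s - ε) < min t₀ (s + ε) := by
          rw [lt_min_iff]
          constructor
          · rw [max_lt_iff]; constructor <;> linarith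
          · rw [max_lt_iff]; constructor <;> linarith
        obtain ⟨q, hq1, hq2⟩ := exists_rat_btwn hab
        have hqIcc : (q:ℝ) ∈ Set.Icc (0:ℝ) t₀ :=
          ⟨((le_max_left 0 (s - ε)).trans_lt hq1).le, (hq2.trans_le (min_le_left _ _)).le⟩
        have hdist : dist (q:ℝ) s < ε := by
          rw [Real.dist_eq, abs_sub_lt_iff]
          constructor
          · have := hq2.trans_le (min_le_right t₀ (s + ε)); linarith
          · have := (le_max_right 0 (s - ε)).trans_lt hq1; linarith
        have hd := hball _ hdist
        have hWq2 : (n:ℝ) ≤ ‖W ω (q:ℝ)‖ := by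
          have h3 : ‖W ω s‖ - ‖W ω (q:ℝ)‖ ≤ dist (W ω (q:ℝ)) (W ω s) := by
            rw [dist_eq_norm]
            have := norm_sub_norm_le (W ω s) (W ω (q:ℝ))
            rw [← norm_neg (W ω s - W ω (q:ℝ))] at this
            simpa [neg_sub] using this
          linarith
        exact hωC (Set.mem_iUnion.mpr ⟨q, hqIcc, hWq2⟩)
      have hfmax : f ω ≤ max (T x ω - t₀) 0 := by
        rw [hfeq]
        calc (volume (Set.Ioc 0 (T x ω) ∩ S)).toReal
            ≤ (volume (Set.Ioc t₀ (T x ω))).toReal := by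
              apply ENNReal.toReal_mono
              · rw [Real.volume_Ioc]; exact ENNReal.ofReal_ne_top
              · exact measure_mono hsub
          _ ≤ max (T x ω - t₀) 0 := by
              rw [Real.volume_Ioc]
              rcases le_or_gt (T x ω - t₀) 0 with h | h
              · rw [ENNReal.ofReal_of_nonpos h]; simp
              · rw [ENNReal.toReal_ofReal h.le]; exact le_max_left _ _
      simp only [hgdef]
      nlinarith [mul_nonneg ht₀pos.le hind_nonneg]
  have hfnn : ∀ ω, (0:ℝ) ≤ f ω := fun ω =>
    integral_nonneg fun t => Set.indicator_nonneg (fun _ _ => zero_le_one) t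
  -- conclude
  have hPCn : (P (C n)).toReal < δ / (2 * t₀) := ENNReal.toReal_lt_of_lt_ofReal hn
  have hmaxint : ∫ ω, max (T x ω - t₀) 0 ∂P ≤ Real.exp (-lam * t₀) / lam := by
    rw [integral_eq_lintegral_of_nonneg_ae (Filter.Eventually.of_forall hTnn)
      hTm.aestronglyMeasurable]
    calc (∫⁻ ω, ENNReal.ofReal (max (T x ω - t₀) 0) ∂P).toReal
        ≤ (ENNReal.ofReal (Real.exp (-lam * t₀) / lam)).toReal :=
          ENNReal.toReal_mono ENNReal.ofReal_ne_top key
      _ = Real.exp (-lam * t₀) / lam :=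
          ENNReal.toReal_ofReal (by positivity)
  calc ∫ ω, f ω ∂P ≤ ∫ ω, g ω ∂P :=
        integral_mono_of_nonneg (Filter.Eventually.of_forall hfnn) hgint hae
    _ = t₀ * ∫ ω, Set.indicator (C n) (fun _ => (1:ℝ)) ω ∂P
        + ∫ ω, max (T x ω - t₀) 0 ∂P := by
        rw [integral_add (hg1.const_mul t₀) hgmax_int, integral_const_mul]
    _ = t₀ * (P (C n)).toReal + ∫ ω, max (T x ω - t₀) 0 ∂P := by
        rw [integral_indicator_const (1:ℝ) (hCmeas n)]; simp [Measure.real]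
    _ < t₀ * (δ / (2 * t₀)) + δ / 2 := by
        exact add_lt_add (mul_lt_mul_of_pos_left hPCn ht₀pos)
          (lt_of_le_of_lt hmaxint ht₀δ)
    _ = δ := by field_simp; ring
end

section
/- Let (Ω, F, P) be a probability space with a filtration (F_n)_{n∈ℕ}. Let (Y_n) be an adapted sequence of nonnegative integrable random variables, (S_n) an adapted nondecreasing sequence of nonnegative integrable random variables with S₀ = 0, and (A_n) a nonincreasing sequence of events with A_n ∈ F_n. Let α, β, λ̄₀, λ̲₁ > 0 with λ̲₁·α > λ̄₀·β. Assume for every n: (i) almost surely (S_{n+1} − S_n)·1_{A_n^c} = 0; (ii) if n is even: E[Y_{n+1} | F_n] ≤ Y_n − α·E[S_{n+1} − S_n | F_n] a.s. and 1_{A_n}·E[S_{n+1} − S_n | F_n] ≥ λ̄₀⁻¹·1_{A_n} a.s.; (iii) if n is odd: E[Y_{n+1} | F_n] ≤ Y_n + β·E[S_{n+1} − S_n | F_n] a.s. and 1_{A_n}·E[S_{n+1} − S_n | F_n] ≤ λ̲₁⁻¹·1_{A_n} a.s. Then, with q := λ̄₀β/(λ̲₁α) ∈ (0,1) and c := min((1−q)α/2,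 (1−q)β/(2q)), one has sup_n E[S_n] ≤ c⁻¹·E[Y₀]. -/
open MeasureTheory

private lemma aux13sum (d : ℕ → ℝ) (α β K c : ℝ)
    (hd0 : ∀ n, 0 ≤ d n) (hK0 : 0 ≤ K) (hc0 : 0 ≤ c) (hβ0 : 0 ≤ β)
    (hcα : c ≤ α) (hKc : c + (c + β) * K ≤ α)
    (hpair : ∀ k, d (2 * k + 1) ≤ K * d (2 * k)) :
    ∀ N, c * ∑ n ∈ Finset.range N, d n
      ≤ ∑ n ∈ Finset.range N, (if Even n then α else -β) * d n := by
  have key : ∀ k, c * ∑ n ∈ Finset.range (2 * k), d n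
      ≤ ∑ n ∈ Finset.range (2 * k), (if Even n then α else -β) * d n := by
    intro k
    induction k with
    | zero => simp
    | succ k ih =>
      have h2k2 : 2 * (k + 1) = (2 * k) + 1 + 1 := by ring
      rw [h2k2, Finset.sum_range_succ, Finset.sum_range_succ,
          Finset.sum_range_succ, Finset.sum_range_succ]
      have he : Even (2 * k) := ⟨k, by ring⟩
      have ho : ¬ Even (2 * k + 1) := fun h => (Nat.even_add_one.mp h) he
      rw [if_pos he, if_neg ho]
      have hp := hpair k
      have h1 := hd0 (2 * k)
      have h2 := hd0 (2 * k + 1)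
      have h3 : (c + β) * d (2 * k + 1) ≤ (c + β) * (K * d (2 * k)) :=
        mul_le_mul_of_nonneg_left hp (by linarith)
      have h4 : (c + (c + β) * K) * d (2 * k) ≤ α * d (2 * k) :=
        mul_le_mul_of_nonneg_right hKc h1
      nlinarith [ih]
  intro N
  rcases Nat.even_or_odd N with ⟨k, hk⟩ | ⟨k, hk⟩
  · have : N = 2 * k := by omega
    rw [this]; exact key k
  · have : N = 2 * k + 1 := by omega
    rw [this, Finset.sum_range_succ, Finset.sum_range_succ]
    have he : Even (2 * k) := ⟨k, by ring⟩
    rw [if_pos he]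
    have h1 := hd0 (2 * k)
    have h2 : c * d (2 * k) ≤ α * d (2 * k) := mul_le_mul_of_nonneg_right hcα h1
    nlinarith [key k]

/-- Discrete-time Lyapunov abstraction of Theorem 1: a nonnegative adapted sequence `Y`
decreasing at rate `α` per unit of elapsed stopped time `S` on even steps, increasing at
rate at most `β` on odd steps, with conditional inter-step time bounds `λ̄₀⁻¹` from below
(even steps, on `A_n`) and `λ̲₁⁻¹` from above (odd steps, on `A_n`), the increments of `S`
vanishing off `A_n`, and the balance condition `λ̲₁ α > λ̄₀ β`, satisfies
`sup_n E[S_n] ≤ c⁻¹ E[Y₀]` where `q = λ̄₀β/(λ̲₁α)` and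
`c = min((1-q)α/2, (1-q)β/(2q))`. -/
theorem stmt13 {Ω : Type*} [mΩ : MeasurableSpace Ω] (P : Measure Ω) [IsProbabilityMeasure P]
    (𝓕 : Filtration ℕ mΩ)
    (Y : ℕ → Ω → ℝ) (hYadapted : ∀ n, Measurable[𝓕 n] (Y n))
    (hY0 : ∀ n ω, 0 ≤ Y n ω) (hYint : ∀ n, Integrable (Y n) P)
    (S : ℕ → Ω → ℝ) (hSadapted : ∀ n, Measurable[𝓕 n] (S n))
    (hS0 : ∀ n ω, 0 ≤ S n ω) (hSint : ∀ n, Integrable (S n) P)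
    (hSzero : ∀ ω, S 0 ω = 0) (hSmono : ∀ n ω, S n ω ≤ S (n + 1) ω)
    (A : ℕ → Set Ω) (hAmeas : ∀ n, MeasurableSet[𝓕 n] (A n))
    (hAanti : ∀ n, A (n + 1) ⊆ A n)
    (α β lam0hi lam1lo : ℝ) (hα : 0 < α) (hβ : 0 < β)
    (hl0 : 0 < lam0hi) (hl1 : 0 < lam1lo)
    (hbal : lam0hi * β < lam1lo * α)
    (hstop : ∀ n, ∀ᵐ ω ∂P,
      (S (n + 1) ω - S n ω) * (A n)ᶜ.indicator (fun _ => (1:ℝ)) ω = 0)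
    (heven : ∀ n, Even n →
      (∀ᵐ ω ∂P, (P[Y (n + 1) | 𝓕 n]) ω
          ≤ Y n ω - α * (P[fun ω' => S (n + 1) ω' - S n ω' | 𝓕 n]) ω) ∧
      (∀ᵐ ω ∂P, lam0hi⁻¹ * (A n).indicator (fun _ => (1:ℝ)) ω
          ≤ (A n).indicator (fun _ => (1:ℝ)) ω
              * (P[fun ω' => S (n + 1) ω' - S n ω' | 𝓕 n]) ω))
    (hodd : ∀ n, Odd n →
      (∀ᵐ ω ∂P, (P[Y (n + 1) | 𝓕 n]) ω
          ≤ Y n ω + β * (P[fun ω' => S (n + 1) ω' - S n ω' | 𝓕 n]) ω) ∧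
      (∀ᵐ ω ∂P, (A n).indicator (fun _ => (1:ℝ)) ω
              * (P[fun ω' => S (n + 1) ω' - S n ω' | 𝓕 n]) ω
          ≤ lam1lo⁻¹ * (A n).indicator (fun _ => (1:ℝ)) ω))
    (q c : ℝ) (hq : q = lam0hi * β / (lam1lo * α))
    (hc : c = min ((1 - q) * α / 2) ((1 - q) * β / (2 * q))) :
    ∀ n, ∫ ω, S n ω ∂P ≤ c⁻¹ * ∫ ω, Y 0 ω ∂P := by
  classical
  have hle : ∀ n, 𝓕 n ≤ mΩ := fun n => 𝓕.le n
  have hΔSint : ∀ n, Integrable (fun ω => S (n + 1) ω - S n ω) P :=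
    fun n => (hSint (n + 1)).sub (hSint n)
  have hAm : ∀ n, MeasurableSet (A n) := fun n => hle n _ (hAmeas n)
  have hIint : ∀ n, Integrable ((A n).indicator (fun _ => (1:ℝ))) P :=
    fun n => (integrable_const 1).indicator (hAm n)
  have hgint : ∀ n, Integrable (P[fun ω' => S (n + 1) ω' - S n ω' | 𝓕 n]) P :=
    fun n => integrable_condExp
  have hg0 : ∀ n, 0 ≤ᵐ[P] P[fun ω' => S (n + 1) ω' - S n ω' | 𝓕 n] := fun n =>
    condExp_nonneg (Filter.Eventually.of_forall fun ω => sub_nonneg.2 (hSmono n ω))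
  have hgd : ∀ n, ∫ ω, (P[fun ω' => S (n + 1) ω' - S n ω' | 𝓕 n]) ω ∂P
      = ∫ ω, (S (n + 1) ω - S n ω) ∂P := fun n => integral_condExp (hle n)
  have hd0 : ∀ n, 0 ≤ ∫ ω, (S (n + 1) ω - S n ω) ∂P :=
    fun n => integral_nonneg fun ω => sub_nonneg.2 (hSmono n ω)
  have hm0 : ∀ n, 0 ≤ ∫ ω, (A n).indicator (fun _ => (1:ℝ)) ω ∂P :=
    fun n => integral_nonneg fun ω => Set.indicator_nonneg (fun _ _ => zero_le_one) ω
  have hy0 : ∀ n, 0 ≤ ∫ ω, Y n ω ∂P := fun n => integral_nonneg (hY0 n)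
  -- drift inequalities at the level of expectations
  have hA1 : ∀ n, Even n → ∫ ω, Y (n + 1) ω ∂P
      ≤ ∫ ω, Y n ω ∂P - α * ∫ ω, (S (n + 1) ω - S n ω) ∂P := by
    intro n hn
    have h := (heven n hn).1
    have hint1 : Integrable
        (fun ω => Y n ω - α * (P[fun ω' => S (n + 1) ω' - S n ω' | 𝓕 n]) ω) P :=
      (hYint n).sub ((hgint n).const_mul α)
    have h2 : ∫ ω, (P[Y (n + 1) | 𝓕 n]) ω ∂P
        ≤ ∫ ω, (Y n ω - α * (P[fun ω' => S (n + 1) ω' - S n ω' | 𝓕 n]) ω) ∂P :=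
      integral_mono_ae integrable_condExp hint1 h
    rw [integral_condExp (hle n)] at h2
    rwa [integral_sub (hYint n) ((hgint n).const_mul α), integral_const_mul, hgd] at h2
  have hC1 : ∀ n, Odd n → ∫ ω, Y (n + 1) ω ∂P
      ≤ ∫ ω, Y n ω ∂P + β * ∫ ω, (S (n + 1) ω - S n ω) ∂P := by
    intro n hn
    have h := (hodd n hn).1
    have hint1 : Integrable
        (fun ω => Y n ω + β * (P[fun ω' => S (n + 1) ω' - S n ω' | 𝓕 n]) ω) P :=
      (hYint n).add ((hgint n).const_mul β)
    have h2 : ∫ ω, (P[Y (n + 1) | 𝓕 n]) ω ∂P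
        ≤ ∫ ω, (Y n ω + β * (P[fun ω' => S (n + 1) ω' - S n ω' | 𝓕 n]) ω) ∂P :=
      integral_mono_ae integrable_condExp hint1 h
    rw [integral_condExp (hle n)] at h2
    rwa [integral_add (hYint n) ((hgint n).const_mul β), integral_const_mul, hgd] at h2
  -- lower bound on even increments
  have hB : ∀ n, Even n → lam0hi⁻¹ * (∫ ω, (A n).indicator (fun _ => (1:ℝ)) ω ∂P)
      ≤ ∫ ω, (S (n + 1) ω - S n ω) ∂P := by
    intro n hn
    have h := (heven n hn).2
    have h2 : ∫ ω, lam0hi⁻¹ * (A n).indicator (fun _ => (1:ℝ)) ω ∂P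
        ≤ ∫ ω, (A n).indicator (P[fun ω' => S (n + 1) ω' - S n ω' | 𝓕 n]) ω ∂P := by
      refine integral_mono_ae ((hIint n).const_mul _) ((hgint n).indicator (hAm n)) ?_
      filter_upwards [h] with ω hω
      by_cases hA : ω ∈ A n
      · simpa [Set.indicator_of_mem hA] using hω
      · simp [Set.indicator_of_notMem hA]
    have h3 : ∫ ω, (A n).indicator (P[fun ω' => S (n + 1) ω' - S n ω' | 𝓕 n]) ω ∂P
        ≤ ∫ ω, (P[fun ω' => S (n + 1) ω' - S n ω' | 𝓕 n]) ω ∂P := by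
      refine integral_mono_ae ((hgint n).indicator (hAm n)) (hgint n) ?_
      filter_upwards [hg0 n] with ω hω
      by_cases hA : ω ∈ A n
      · simp [Set.indicator_of_mem hA]
      · simpa [Set.indicator_of_notMem hA] using hω
    rw [integral_const_mul] at h2
    exact h2.trans (h3.trans_eq (hgd n))
  -- upper bound on odd increments
  have hD : ∀ n, Odd n → ∫ ω, (S (n + 1) ω - S n ω) ∂P
      ≤ lam1lo⁻¹ * ∫ ω, (A n).indicator (fun _ => (1:ℝ)) ω ∂P := by
    intro n hn
    have h := (hodd n hn).2
    have h0 : (fun ω => S (n + 1) ω - S n ω)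
        =ᵐ[P] (A n).indicator (fun ω => S (n + 1) ω - S n ω) := by
      filter_upwards [hstop n] with ω hω
      by_cases hA : ω ∈ A n
      · simp [Set.indicator_of_mem hA]
      · have hA' : ω ∈ (A n)ᶜ := hA
        rw [Set.indicator_of_mem hA', mul_one] at hω
        simp [Set.indicator_of_notMem hA, hω]
    calc ∫ ω, (S (n + 1) ω - S n ω) ∂P
        = ∫ ω, (A n).indicator (fun ω => S (n + 1) ω - S n ω) ω ∂P :=
          integral_congr_ae h0
      _ = ∫ ω, (P[(A n).indicator (fun ω => S (n + 1) ω - S n ω) | 𝓕 n]) ω ∂P :=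
          (integral_condExp (hle n)).symm
      _ = ∫ ω, (A n).indicator (P[fun ω' => S (n + 1) ω' - S n ω' | 𝓕 n]) ω ∂P :=
          integral_congr_ae (condExp_indicator (hΔSint n) (hAmeas n))
      _ ≤ ∫ ω, lam1lo⁻¹ * (A n).indicator (fun _ => (1:ℝ)) ω ∂P := by
          refine integral_mono_ae ((hgint n).indicator (hAm n))
            ((hIint n).const_mul _) ?_
          filter_upwards [h] with ω hω
          by_cases hA : ω ∈ A n
          · simpa [Set.indicator_of_mem hA] using hω
          · simp [Set.indicator_of_notMem hA]
      _ = lam1lo⁻¹ * ∫ ω, (A n).indicator (fun _ => (1:ℝ)) ω ∂P := integral_const_mul _ _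
  -- monotonicity of the events
  have hmmono : ∀ n, ∫ ω, (A (n + 1)).indicator (fun _ => (1:ℝ)) ω ∂P
      ≤ ∫ ω, (A n).indicator (fun _ => (1:ℝ)) ω ∂P := by
    intro n
    refine integral_mono (hIint _) (hIint _) fun ω => ?_
    exact Set.indicator_le_indicator_of_subset (hAanti n) (fun _ => zero_le_one) ω
  -- pair bound
  have hpair : ∀ k, ∫ ω, (S (2 * k + 1 + 1) ω - S (2 * k + 1) ω) ∂P
      ≤ (lam1lo⁻¹ * lam0hi) * ∫ ω, (S (2 * k + 1) ω - S (2 * k) ω) ∂P := by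
    intro k
    have h1 := hD (2 * k + 1) ⟨k, by ring⟩
    have h2 := hmmono (2 * k)
    have h3 := hB (2 * k) ⟨k, by ring⟩
    have hm' : ∫ ω, (A (2 * k)).indicator (fun _ => (1:ℝ)) ω ∂P
        ≤ lam0hi * ∫ ω, (S (2 * k + 1) ω - S (2 * k) ω) ∂P := by
      have h4 := mul_le_mul_of_nonneg_left h3 hl0.le
      rwa [← mul_assoc, mul_inv_cancel₀ hl0.ne', one_mul] at h4
    calc ∫ ω, (S (2 * k + 1 + 1) ω - S (2 * k + 1) ω) ∂P
        ≤ lam1lo⁻¹ * ∫ ω, (A (2 * k + 1)).indicator (fun _ => (1:ℝ)) ω ∂P := h1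
      _ ≤ lam1lo⁻¹ * ∫ ω, (A (2 * k)).indicator (fun _ => (1:ℝ)) ω ∂P :=
          mul_le_mul_of_nonneg_left h2 (by positivity)
      _ ≤ lam1lo⁻¹ * (lam0hi * ∫ ω, (S (2 * k + 1) ω - S (2 * k) ω) ∂P) :=
          mul_le_mul_of_nonneg_left hm' (by positivity)
      _ = (lam1lo⁻¹ * lam0hi) * ∫ ω, (S (2 * k + 1) ω - S (2 * k) ω) ∂P := by ring
  -- telescoping sum for S
  have hTS : ∀ N, ∫ ω, S N ω ∂P
      = ∑ n ∈ Finset.range N, ∫ ω, (S (n + 1) ω - S n ω) ∂P := by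
    intro N
    induction N with
    | zero => simp [hSzero]
    | succ N ih =>
      rw [Finset.sum_range_succ, ← ih, integral_sub (hSint (N + 1)) (hSint N)]
      ring
  -- telescoping drift bound
  have hGle : ∀ M, ∑ n ∈ Finset.range M,
      (if Even n then α else -β) * (∫ ω, (S (n + 1) ω - S n ω) ∂P)
      ≤ ∫ ω, Y 0 ω ∂P := by
    have key : ∀ M, ∑ n ∈ Finset.range M,
        (if Even n then α else -β) * (∫ ω, (S (n + 1) ω - S n ω) ∂P)
        ≤ ∫ ω, Y 0 ω ∂P - ∫ ω, Y M ω ∂P := by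
      intro M
      induction M with
      | zero => simp
      | succ M ih =>
        rw [Finset.sum_range_succ]
        rcases Nat.even_or_odd M with hM | hM
        · have h := hA1 M hM
          rw [if_pos hM]
          linarith
        · have h := hC1 M hM
          rw [if_neg (Nat.not_even_iff_odd.mpr hM)]
          linarith
    intro M
    linarith [key M, hy0 M]
  -- constants
  have hq0 : 0 < q := by rw [hq]; positivity
  have hq1 : q < 1 := by rw [hq]; exact (div_lt_one (by positivity)).mpr hbal
  have h1q : 0 < 1 - q := by linarith
  have hc0 : 0 < c := by
    rw [hc]
    exact lt_min (div_pos (mul_pos h1q hα) two_pos)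
      (div_pos (mul_pos h1q hβ) (by positivity))
  have hc1 : c ≤ (1 - q) * α / 2 := hc ▸ min_le_left _ _
  have hc2 : c ≤ (1 - q) * β / (2 * q) := hc ▸ min_le_right _ _
  have hK0 : (0:ℝ) ≤ lam1lo⁻¹ * lam0hi := by positivity
  have hβK : β * (lam1lo⁻¹ * lam0hi) = q * α := by
    rw [hq]; field_simp
  have hcK : c * (lam1lo⁻¹ * lam0hi) ≤ (1 - q) * α / 2 := by
    have h5 : c * (lam1lo⁻¹ * lam0hi) ≤ ((1 - q) * β / (2 * q)) * (lam1lo⁻¹ * lam0hi) :=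
      mul_le_mul_of_nonneg_right hc2 hK0
    have e1 : ((1 - q) * β / (2 * q)) * (lam1lo⁻¹ * lam0hi)
        = (1 - q) * (β * (lam1lo⁻¹ * lam0hi)) / (2 * q) := by ring
    rw [e1, hβK] at h5
    have e2 : (1 - q) * (q * α) / (2 * q) = (1 - q) * α / 2 := by
      field_simp
    rwa [e2] at h5
  have hcα : c ≤ α := by nlinarith
  have hKc : c + (c + β) * (lam1lo⁻¹ * lam0hi) ≤ α := by nlinarith
  -- main combinatorial bound
  have hmain := aux13sum (fun n => ∫ ω, (S (n + 1) ω - S n ω) ∂P) α β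
    (lam1lo⁻¹ * lam0hi) c hd0 hK0 hc0.le hβ.le hcα hKc hpair
  intro N
  have hfin : c * ∫ ω, S N ω ∂P ≤ ∫ ω, Y 0 ω ∂P := by
    rw [hTS N]
    exact (hmain N).trans (hGle N)
  rw [inv_mul_eq_div, le_div_iff₀ hc0]
  linarith
end
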